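/- Let σ_FS be the Borel probability measure on ℂ with density z ↦ 1/(π (1 + |z|²)²) with respect to Lebesgue measure, and for t ≥ 0 let T_t : ℂ → ℂ be the map T_t(z) = e^{−t/2} z. Then for all t ≥ 0: t − 2 ≤ D( (T_t)_* σ_FS ‖ σ_FS ) ≤ t. In particular D((T_t)_*σ_FS ‖ σ_FS) = t + O(1) as t → ∞. -/

import Mathlib

open MeasureTheory
open scoped ENNReal Classical

/-- The normalized Fubini–Study volume: the Borel probability measure on `ℂ` with density
`z ↦ 1/(π (1 + |z|²)²)` with respect to Lebesgue measure. -/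
noncomputable def sigmaFS : Measure ℂ :=
  volume.withDensity fun z => ENNReal.ofReal (1 / (Real.pi * (1 + ‖z‖ ^ 2) ^ 2))

/-- The relative entropy (Kullback–Leibler divergence) `D(μ‖ν)`, equal to
`∫ log(dμ/dν) dμ` when `μ ≪ ν` and this integral is defined, and `∞` otherwise. -/
noncomputable def relEnt {α : Type*} [MeasurableSpace α] (μ ν : Measure α) : ℝ≥0∞ :=
  if μ ≪ ν ∧ Integrable (fun x => Real.log (μ.rnDeriv ν x).toReal) μ then
    ENNReal.ofReal (∫ x, Real.log (μ.rnDeriv ν x).toReal ∂μ)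
  else ∞

open Set Filter
open scoped NNReal

namespace MobiusEntropyAux

theorem polarC (f : ℝ → ℝ) :
    ∫ z : ℂ, f ‖z‖ = 2 * Real.pi * ∫ r in Ioi (0:ℝ), r * f r := by
  rw [MeasureTheory.integral_fun_norm_addHaar volume f]
  simp [Complex.finrank_real_complex, smul_eq_mul, NNReal.coe_real_pi, Measure.real, Complex.volume_ball]
  ring

theorem i1 : ∫ r in Ioi (0:ℝ), r / (1 + r ^ 2) ^ 2 = 1 / 2 := by
  have hD : ∀ r : ℝ, HasDerivAt (fun x : ℝ => 1 + x ^ 2) (2 * r) r := fun r => by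
    simpa using ((hasDerivAt_pow 2 r).const_add 1)
  have hderiv : ∀ r ∈ Ioi (0:ℝ), HasDerivAt (fun x : ℝ => -(1/2) / (1 + x ^ 2))
      (r / (1 + r ^ 2) ^ 2) r := by
    intro r _
    have h := (hasDerivAt_const r (-(1/2):ℝ)).div (hD r) (by positivity)
    refine h.congr_deriv ?_
    field_simp
    ring
  have hcont : ContinuousWithinAt (fun x : ℝ => -(1/2) / (1 + x ^ 2)) (Ici 0) 0 := by
    have h := (hasDerivAt_const (0:ℝ) (-(1/2):ℝ)).div (hD 0) (by positivity)
    exact h.continuousAt.continuousWithinAt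
  have htop : Tendsto (fun x : ℝ => 1 + x ^ 2) atTop atTop :=
    tendsto_atTop_add_const_left _ 1 (tendsto_pow_atTop two_ne_zero)
  have htend : Tendsto (fun x : ℝ => -(1/2) / (1 + x ^ 2)) atTop (nhds 0) :=
    tendsto_const_nhds.div_atTop htop
  have := integral_Ioi_of_hasDerivAt_of_nonneg hcont hderiv
    (fun r hr => by have : (0:ℝ) < r := hr; positivity) htend
  rw [this]; norm_num

theorem i2 : ∫ r in Ioi (0:ℝ), r * Real.log (1 + r ^ 2) / (1 + r ^ 2) ^ 2 = 1 / 2 := by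
  have hD : ∀ r : ℝ, HasDerivAt (fun x : ℝ => 1 + x ^ 2) (2 * r) r := fun r => by
    simpa using ((hasDerivAt_pow 2 r).const_add 1)
  have hderiv : ∀ r : ℝ, HasDerivAt
      (fun x : ℝ => -(1/2) * ((Real.log (1 + x ^ 2) + 1) / (1 + x ^ 2)))
      (r * Real.log (1 + r ^ 2) / (1 + r ^ 2) ^ 2) r := by
    intro r
    have hpos : (0:ℝ) < 1 + r ^ 2 := by positivity
    have hnum : HasDerivAt (fun x : ℝ => Real.log (1 + x ^ 2) + 1) (2 * r / (1 + r ^ 2)) r :=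
      ((hD r).log (ne_of_gt hpos)).add_const 1
    have h := (hnum.div (hD r) (ne_of_gt hpos)).const_mul (-(1/2):ℝ)
    refine h.congr_deriv ?_
    field_simp
    ring
  have htop : Tendsto (fun x : ℝ => 1 + x ^ 2) atTop atTop :=
    tendsto_atTop_add_const_left _ 1 (tendsto_pow_atTop two_ne_zero)
  have hlog : Tendsto (fun x : ℝ => Real.log x / x) atTop (nhds 0) := by
    simpa using Real.tendsto_pow_log_div_mul_add_atTop 1 0 1 one_ne_zero
  have htend : Tendsto (fun x : ℝ => -(1/2) * ((Real.log (1 + x ^ 2) + 1) / (1 + x ^ 2)))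
      atTop (nhds 0) := by
    have h1 : Tendsto (fun x : ℝ => Real.log (1 + x ^ 2) / (1 + x ^ 2)) atTop (nhds 0) :=
      hlog.comp htop
    have h2 : Tendsto (fun x : ℝ => 1 / (1 + x ^ 2)) atTop (nhds 0) :=
      tendsto_const_nhds.div_atTop htop
    have h3 := (h1.add h2).const_mul (-(1/2):ℝ)
    simp only [mul_zero, add_zero] at h3
    convert h3 using 2 with x
    ring
  have := integral_Ioi_of_hasDerivAt_of_nonneg
    ((hderiv 0).continuousAt.continuousWithinAt) (fun r _ => hderiv r)
    (fun r hr => by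
      have h0 : (0:ℝ) < r := hr
      have hl : (0:ℝ) ≤ Real.log (1 + r ^ 2) := Real.log_nonneg (by nlinarith)
      positivity) htend
  rw [this]
  norm_num

theorem intfd : Integrable (fun z : ℂ => 1 / (Real.pi * (1 + ‖z‖ ^ 2) ^ 2)) := by
  have h4 : ((Module.finrank ℝ ℂ : ℝ)) < 4 := by
    rw [Complex.finrank_real_complex]; norm_num
  have h := (integrable_rpow_neg_one_add_norm_sq (E := ℂ) (μ := volume) h4).const_mul (1/Real.pi)
  refine h.congr (ae_of_all _ fun z => ?_)
  simp only []
  rw [show (-4/2 : ℝ) = -((2:ℕ):ℝ) by norm_num]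
  rw [Real.rpow_neg (by positivity : (0:ℝ) ≤ 1 + ‖z‖ ^ 2), Real.rpow_natCast,
    one_div, one_div, mul_inv]

theorem intlogfd :
    Integrable (fun z : ℂ => Real.log (1 + ‖z‖ ^ 2) * (1 / (Real.pi * (1 + ‖z‖ ^ 2) ^ 2))) := by
  have h3 : ((Module.finrank ℝ ℂ : ℝ)) < 3 := by
    rw [Complex.finrank_real_complex]; norm_num
  have h := (integrable_rpow_neg_one_add_norm_sq (E := ℂ) (μ := volume) h3).const_mul (2/Real.pi)
  refine h.mono' ?_ (ae_of_all _ fun z => ?_)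
  · exact ((Real.measurable_log.comp (by fun_prop)).mul (by fun_prop)).aestronglyMeasurable
  · have hu0 : (0:ℝ) < 1 + ‖z‖ ^ 2 := by positivity
    have hu1 : (1:ℝ) ≤ 1 + ‖z‖ ^ 2 := by nlinarith [sq_nonneg ‖z‖]
    set u : ℝ := 1 + ‖z‖ ^ 2 with hu
    have hlogu : (0:ℝ) ≤ Real.log u := Real.log_nonneg hu1
    have hlog2 : Real.log u ≤ 2 * Real.sqrt u := by
      have h1 : Real.log u = 2 * Real.log (Real.sqrt u) := by
        rw [Real.log_sqrt hu0.le]; ring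
      have h2 : Real.log (Real.sqrt u) ≤ Real.sqrt u - 1 :=
        Real.log_le_sub_one_of_pos (Real.sqrt_pos.2 hu0)
      nlinarith [Real.sqrt_nonneg u]
    have hrw : u ^ (-3/2 : ℝ) = Real.sqrt u / u ^ 2 := by
      rw [show (-3/2:ℝ) = 1/2 - ((2:ℕ):ℝ) by norm_num, Real.rpow_sub hu0,
        ← Real.sqrt_eq_rpow, Real.rpow_natCast]
    rw [Real.norm_eq_abs, abs_of_nonneg (by positivity), hrw]
    rw [div_eq_mul_inv (2:ℝ) Real.pi]
    have hineq := mul_le_mul_of_nonneg_right hlog2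
      (le_of_lt (show (0:ℝ) < 1 / (Real.pi * u ^ 2) by positivity))
    calc Real.log u * (1 / (Real.pi * u ^ 2))
        ≤ 2 * Real.sqrt u * (1 / (Real.pi * u ^ 2)) := hineq
      _ = 2 * Real.pi⁻¹ * (Real.sqrt u / u ^ 2) := by field_simp

theorem val_fd : ∫ z : ℂ, 1 / (Real.pi * (1 + ‖z‖ ^ 2) ^ 2) = 1 := by
  have h := polarC (fun r => 1 / (Real.pi * (1 + r ^ 2) ^ 2))
  rw [h]
  have e : ∀ r : ℝ, r * (1 / (Real.pi * (1 + r ^ 2) ^ 2)) = (1/Real.pi) * (r / (1 + r ^ 2) ^ 2) :=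
    fun r => by rw [one_div, mul_inv, one_div]; ring
  rw [MeasureTheory.integral_congr_ae (ae_of_all _ fun r => e r),
    MeasureTheory.integral_const_mul, i1]
  field_simp

theorem val_logfd :
    ∫ z : ℂ, Real.log (1 + ‖z‖ ^ 2) * (1 / (Real.pi * (1 + ‖z‖ ^ 2) ^ 2)) = 1 := by
  have h := polarC (fun r => Real.log (1 + r ^ 2) * (1 / (Real.pi * (1 + r ^ 2) ^ 2)))
  rw [h]
  have e : ∀ r : ℝ, r * (Real.log (1 + r ^ 2) * (1 / (Real.pi * (1 + r ^ 2) ^ 2)))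
      = (1/Real.pi) * (r * Real.log (1 + r ^ 2) / (1 + r ^ 2) ^ 2) :=
    fun r => by rw [one_div, mul_inv, one_div]; ring
  rw [MeasureTheory.integral_congr_ae (ae_of_all _ fun r => e r),
    MeasureTheory.integral_const_mul, i2]
  field_simp

theorem meas_fd : Measurable (fun z : ℂ => 1 / (Real.pi * (1 + ‖z‖ ^ 2) ^ 2)) := by fun_prop

theorem sigma_prob : IsProbabilityMeasure sigmaFS := by
  constructor
  rw [sigmaFS, withDensity_apply _ MeasurableSet.univ, Measure.restrict_univ,
    ← ofReal_integral_eq_lintegral_ofReal intfd (ae_of_all _ fun z => by positivity),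
    val_fd, ENNReal.ofReal_one]

theorem sigma_nn : sigmaFS = volume.withDensity
    (fun z => ((fun z : ℂ => (1 / (Real.pi * (1 + ‖z‖ ^ 2) ^ 2)).toNNReal) z : ℝ≥0∞)) := rfl

theorem integrable_L : Integrable (fun z : ℂ => Real.log (1 + ‖z‖ ^ 2)) sigmaFS := by
  rw [sigma_nn, integrable_withDensity_iff_integrable_coe_smul meas_fd.real_toNNReal]
  refine intlogfd.congr (ae_of_all _ fun z => ?_)
  simp only [NNReal.smul_def, smul_eq_mul, Real.coe_toNNReal _ (by positivity :
    (0:ℝ) ≤ 1 / (Real.pi * (1 + ‖z‖ ^ 2) ^ 2))]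
  ring

theorem integral_L : ∫ z, Real.log (1 + ‖z‖ ^ 2) ∂sigmaFS = 1 := by
  rw [sigma_nn, integral_withDensity_eq_integral_smul meas_fd.real_toNNReal]
  have e1 : (fun z : ℂ => (1 / (Real.pi * (1 + ‖z‖ ^ 2) ^ 2)).toNNReal • Real.log (1 + ‖z‖ ^ 2))
      =ᵐ[(volume : Measure ℂ)]
      (fun z : ℂ => Real.log (1 + ‖z‖ ^ 2) * (1 / (Real.pi * (1 + ‖z‖ ^ 2) ^ 2))) :=
    ae_of_all _ fun z => by
      simp only [NNReal.smul_def, smul_eq_mul, Real.coe_toNNReal _ (by positivity :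
        (0:ℝ) ≤ 1 / (Real.pi * (1 + ‖z‖ ^ 2) ^ 2))]
      ring
  rw [MeasureTheory.integral_congr_ae e1, val_logfd]

theorem map_sigma {c : ℝ} (hc : 0 < c) :
    sigmaFS.map (fun z : ℂ => (c : ℂ) * z) =
      sigmaFS.withDensity
        (fun z => ENNReal.ofReal (c ^ 2 * (1 + ‖z‖ ^ 2) ^ 2 / (c ^ 2 + ‖z‖ ^ 2) ^ 2)) := by
  have hT : Measurable fun z : ℂ => (c : ℂ) * z := (continuous_mul_left _).measurable
  have mρ : Measurable fun z : ℂ => c ^ 2 * (1 + ‖z‖ ^ 2) ^ 2 / (c ^ 2 + ‖z‖ ^ 2) ^ 2 := by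
    fun_prop
  have mg : Measurable fun w : ℂ => ENNReal.ofReal (c ^ 2 / (Real.pi * (c ^ 2 + ‖w‖ ^ 2) ^ 2)) := by
    fun_prop
  refine Measure.ext fun s hs => ?_
  rw [Measure.map_apply hT hs]
  rw [sigmaFS, withDensity_apply _ (hT hs), withDensity_apply _ hs, restrict_withDensity hs,
    lintegral_withDensity_eq_lintegral_mul _ (meas_fd.ennreal_ofReal) mρ.ennreal_ofReal]
  have hRHS : ∫⁻ z in s, ((fun z : ℂ => ENNReal.ofReal (1 / (Real.pi * (1 + ‖z‖ ^ 2) ^ 2))) *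
      (fun z : ℂ => ENNReal.ofReal (c ^ 2 * (1 + ‖z‖ ^ 2) ^ 2 / (c ^ 2 + ‖z‖ ^ 2) ^ 2))) z ∂volume
      = ∫⁻ z in s, ENNReal.ofReal (c ^ 2 / (Real.pi * (c ^ 2 + ‖z‖ ^ 2) ^ 2)) ∂volume := by
    refine setLIntegral_congr_fun hs (fun z _ => ?_)
    simp only [Pi.mul_apply]
    rw [← ENNReal.ofReal_mul (by positivity)]
    congr 1
    have h1 : (1:ℝ) + ‖z‖ ^ 2 ≠ 0 := by positivity
    have h2 : (c:ℝ) ^ 2 + ‖z‖ ^ 2 ≠ 0 := by positivity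
    field_simp
  rw [hRHS]
  have hTs : (fun z : ℂ => (c : ℂ) * z) = (fun z : ℂ => c • z) :=
    funext fun z => (Complex.real_smul).symm
  have hmapvol : Measure.map (fun z : ℂ => c • z) (volume : Measure ℂ)
      = ENNReal.ofReal ((c ^ 2)⁻¹) • volume := by
    have := Measure.map_addHaar_smul (volume : Measure ℂ) (ne_of_gt hc)
    rwa [Complex.finrank_real_complex, abs_of_pos (by positivity)] at this
  have key : ∀ z : ℂ, ENNReal.ofReal (1 / (Real.pi * (1 + ‖z‖ ^ 2) ^ 2))
      = ENNReal.ofReal (c ^ 2) *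
        ENNReal.ofReal (c ^ 2 / (Real.pi * (c ^ 2 + ‖(c : ℂ) * z‖ ^ 2) ^ 2)) := by
    intro z
    rw [← ENNReal.ofReal_mul (by positivity)]
    congr 1
    have hnorm : ‖(c : ℂ) * z‖ = c * ‖z‖ := by
      rw [norm_mul, Complex.norm_real, Real.norm_eq_abs, abs_of_pos hc]
    rw [hnorm]
    have h1 : (1:ℝ) + ‖z‖ ^ 2 ≠ 0 := by positivity
    have hc2 : (c:ℝ) ≠ 0 := ne_of_gt hc
    field_simp
  calc ∫⁻ z in (fun z : ℂ => (c : ℂ) * z) ⁻¹' s,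
        ENNReal.ofReal (1 / (Real.pi * (1 + ‖z‖ ^ 2) ^ 2)) ∂volume
      = ∫⁻ z in (fun z : ℂ => (c : ℂ) * z) ⁻¹' s, ENNReal.ofReal (c ^ 2) *
          ENNReal.ofReal (c ^ 2 / (Real.pi * (c ^ 2 + ‖(c : ℂ) * z‖ ^ 2) ^ 2)) ∂volume := by
        refine setLIntegral_congr_fun (hT hs) (fun z _ => key z)
    _ = ENNReal.ofReal (c ^ 2) * ∫⁻ z in (fun z : ℂ => (c : ℂ) * z) ⁻¹' s,
          ENNReal.ofReal (c ^ 2 / (Real.pi * (c ^ 2 + ‖(c : ℂ) * z‖ ^ 2) ^ 2)) ∂volume := by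
        rw [lintegral_const_mul _ (by fun_prop)]
    _ = ENNReal.ofReal (c ^ 2) * ∫⁻ w in s,
          ENNReal.ofReal (c ^ 2 / (Real.pi * (c ^ 2 + ‖w‖ ^ 2) ^ 2))
            ∂(Measure.map (fun z : ℂ => (c : ℂ) * z) volume) := by
        rw [setLIntegral_map hs mg hT]
    _ = ∫⁻ w in s, ENNReal.ofReal (c ^ 2 / (Real.pi * (c ^ 2 + ‖w‖ ^ 2) ^ 2)) ∂volume := by
        rw [hTs, hmapvol, Measure.restrict_smul, lintegral_smul_measure, smul_eq_mul, ← mul_assoc,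
          ← ENNReal.ofReal_mul (by positivity), mul_inv_cancel₀ (by positivity),
          ENNReal.ofReal_one, one_mul]

end MobiusEntropyAux

open MobiusEntropyAux

/-- **Entropy growth along a Möbius one-parameter subgroup.** For `t ≥ 0` let
`T_t : ℂ → ℂ`, `T_t(z) = e^{-t/2} z`. Then `t − 2 ≤ D((T_t)_* σ_FS ‖ σ_FS) ≤ t`; in
particular `D((T_t)_* σ_FS ‖ σ_FS) = t + O(1)` as `t → ∞`. -/
theorem mobius_entropy_growth (t : ℝ) (ht : 0 ≤ t) :
    ENNReal.ofReal (t - 2) ≤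
        relEnt (sigmaFS.map fun z => (Real.exp (-t / 2) : ℂ) * z) sigmaFS ∧
      relEnt (sigmaFS.map fun z => (Real.exp (-t / 2) : ℂ) * z) sigmaFS ≤
        ENNReal.ofReal t := by
  set c : ℝ := Real.exp (-t / 2) with hcdef
  have hc : 0 < c := Real.exp_pos _
  have hlogc : Real.log c = -t / 2 := Real.log_exp _
  have hc1 : c ≤ 1 := by
    rw [hcdef, ← Real.exp_zero]
    exact Real.exp_le_exp.mpr (by linarith)
  have hc2le : c ^ 2 ≤ 1 := by nlinarith
  haveI : IsProbabilityMeasure sigmaFS := sigma_prob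
  have hT : Measurable fun z : ℂ => (c : ℂ) * z := (continuous_mul_left _).measurable
  have mρ : Measurable fun z : ℂ => c ^ 2 * (1 + ‖z‖ ^ 2) ^ 2 / (c ^ 2 + ‖z‖ ^ 2) ^ 2 := by
    fun_prop
  have hmap := map_sigma hc
  rw [hmap]
  have hacσ : (sigmaFS.withDensity
        fun z => ENNReal.ofReal (c ^ 2 * (1 + ‖z‖ ^ 2) ^ 2 / (c ^ 2 + ‖z‖ ^ 2) ^ 2)) ≪ sigmaFS :=
    withDensity_absolutelyContinuous _ _
  have hrn := Measure.rnDeriv_withDensity sigmaFS mρ.ennreal_ofReal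
  have hrnμ := hacσ.ae_eq hrn
  have haeeq : (fun x => Real.log (((sigmaFS.withDensity
          fun z => ENNReal.ofReal (c ^ 2 * (1 + ‖z‖ ^ 2) ^ 2 / (c ^ 2 + ‖z‖ ^ 2) ^ 2)).rnDeriv
        sigmaFS) x).toReal)
      =ᵐ[sigmaFS.withDensity
          fun z => ENNReal.ofReal (c ^ 2 * (1 + ‖z‖ ^ 2) ^ 2 / (c ^ 2 + ‖z‖ ^ 2) ^ 2)]
      fun x => Real.log (c ^ 2 * (1 + ‖x‖ ^ 2) ^ 2 / (c ^ 2 + ‖x‖ ^ 2) ^ 2) :=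
    hrnμ.mono fun x hx => by
      simp only []
      rw [hx, ENNReal.toReal_ofReal (by positivity)]
  -- the pointwise identity
  have hpoint : ∀ z : ℂ,
      Real.log (c ^ 2 * (1 + ‖(c : ℂ) * z‖ ^ 2) ^ 2 / (c ^ 2 + ‖(c : ℂ) * z‖ ^ 2) ^ 2)
        = t + (2 * Real.log (1 + c ^ 2 * ‖z‖ ^ 2) - 2 * Real.log (1 + ‖z‖ ^ 2)) := by
    intro z
    have hnorm : ‖(c : ℂ) * z‖ = c * ‖z‖ := by
      rw [norm_mul, Complex.norm_real, Real.norm_eq_abs, abs_of_pos hc]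
    have hx : (0:ℝ) < 1 + c ^ 2 * ‖z‖ ^ 2 := by positivity
    have hy : (0:ℝ) < 1 + ‖z‖ ^ 2 := by positivity
    have hval : c ^ 2 * (1 + ‖(c : ℂ) * z‖ ^ 2) ^ 2 / (c ^ 2 + ‖(c : ℂ) * z‖ ^ 2) ^ 2
        = (1 + c ^ 2 * ‖z‖ ^ 2) ^ 2 / (c ^ 2 * (1 + ‖z‖ ^ 2) ^ 2) := by
      rw [hnorm]
      have h1 : (c:ℝ) ≠ 0 := ne_of_gt hc
      field_simp
    rw [hval, Real.log_div (by positivity) (by positivity),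
      Real.log_mul (by positivity) (by positivity)]
    simp only [Real.log_pow]
    push_cast
    rw [hlogc]
    ring
  -- integrability of the comparison functions
  have hφ1int : Integrable (fun z : ℂ => 2 * Real.log (1 + c ^ 2 * ‖z‖ ^ 2)) sigmaFS := by
    refine (integrable_L.const_mul 2).mono'
      ((measurable_const.mul (Real.measurable_log.comp (by fun_prop))).aestronglyMeasurable)
      (ae_of_all _ fun z => ?_)
    have h0 : (0:ℝ) ≤ Real.log (1 + c ^ 2 * ‖z‖ ^ 2) :=
      Real.log_nonneg (by nlinarith [sq_nonneg ‖z‖])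
    have hle : Real.log (1 + c ^ 2 * ‖z‖ ^ 2) ≤ Real.log (1 + ‖z‖ ^ 2) :=
      Real.log_le_log (by positivity) (by nlinarith [sq_nonneg ‖z‖])
    rw [Real.norm_eq_abs, abs_of_nonneg (by linarith)]
    linarith
  have hφint : Integrable
      (fun z : ℂ => 2 * Real.log (1 + c ^ 2 * ‖z‖ ^ 2) - 2 * Real.log (1 + ‖z‖ ^ 2)) sigmaFS :=
    hφ1int.sub (integrable_L.const_mul 2)
  have hψint : Integrable
      (fun z : ℂ => t + (2 * Real.log (1 + c ^ 2 * ‖z‖ ^ 2) - 2 * Real.log (1 + ‖z‖ ^ 2)))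
      sigmaFS := (integrable_const t).add hφint
  have hmeaslogρ : Measurable
      fun x : ℂ => Real.log (c ^ 2 * (1 + ‖x‖ ^ 2) ^ 2 / (c ^ 2 + ‖x‖ ^ 2) ^ 2) :=
    Real.measurable_log.comp mρ
  have hintμ : Integrable
      (fun x : ℂ => Real.log (c ^ 2 * (1 + ‖x‖ ^ 2) ^ 2 / (c ^ 2 + ‖x‖ ^ 2) ^ 2))
      (sigmaFS.withDensity
        fun z => ENNReal.ofReal (c ^ 2 * (1 + ‖z‖ ^ 2) ^ 2 / (c ^ 2 + ‖z‖ ^ 2) ^ 2)) := by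
    rw [← hmap, integrable_map_measure hmeaslogρ.aestronglyMeasurable hT.aemeasurable]
    exact hψint.congr (ae_of_all _ fun z => (hpoint z).symm)
  have hcondint : Integrable (fun x => Real.log (((sigmaFS.withDensity
        fun z => ENNReal.ofReal (c ^ 2 * (1 + ‖z‖ ^ 2) ^ 2 / (c ^ 2 + ‖z‖ ^ 2) ^ 2)).rnDeriv
      sigmaFS) x).toReal)
      (sigmaFS.withDensity
        fun z => ENNReal.ofReal (c ^ 2 * (1 + ‖z‖ ^ 2) ^ 2 / (c ^ 2 + ‖z‖ ^ 2) ^ 2)) :=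
    hintμ.congr haeeq.symm
  -- value of the entropy integral
  have hval : ∫ x, Real.log (((sigmaFS.withDensity
        fun z => ENNReal.ofReal (c ^ 2 * (1 + ‖z‖ ^ 2) ^ 2 / (c ^ 2 + ‖z‖ ^ 2) ^ 2)).rnDeriv
      sigmaFS) x).toReal
      ∂(sigmaFS.withDensity
        fun z => ENNReal.ofReal (c ^ 2 * (1 + ‖z‖ ^ 2) ^ 2 / (c ^ 2 + ‖z‖ ^ 2) ^ 2))
      = t + ∫ z, (2 * Real.log (1 + c ^ 2 * ‖z‖ ^ 2) - 2 * Real.log (1 + ‖z‖ ^ 2)) ∂sigmaFS := by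
    rw [MeasureTheory.integral_congr_ae haeeq]
    conv_lhs => rw [← hmap]
    rw [integral_map hT.aemeasurable hmeaslogρ.aestronglyMeasurable]
    rw [MeasureTheory.integral_congr_ae (ae_of_all _ fun z => hpoint z)]
    rw [integral_add (integrable_const t) hφint, integral_const, probReal_univ,
      one_smul]
  -- bounds on the correction term
  have hub : ∫ z, (2 * Real.log (1 + c ^ 2 * ‖z‖ ^ 2) - 2 * Real.log (1 + ‖z‖ ^ 2)) ∂sigmaFS
      ≤ 0 := by
    refine integral_nonpos fun z => ?_
    have hle : Real.log (1 + c ^ 2 * ‖z‖ ^ 2) ≤ Real.log (1 + ‖z‖ ^ 2) :=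
      Real.log_le_log (by positivity) (by nlinarith [sq_nonneg ‖z‖])
    simp only [Pi.zero_apply]
    linarith
  have hlb : (-2:ℝ)
      ≤ ∫ z, (2 * Real.log (1 + c ^ 2 * ‖z‖ ^ 2) - 2 * Real.log (1 + ‖z‖ ^ 2)) ∂sigmaFS := by
    have h1 : ∫ z, (-2) * Real.log (1 + ‖z‖ ^ 2) ∂sigmaFS = -2 := by
      rw [MeasureTheory.integral_const_mul, integral_L]
      norm_num
    have h2 := integral_mono (integrable_L.const_mul (-2)) hφint (fun z => by
      have h0 : (0:ℝ) ≤ Real.log (1 + c ^ 2 * ‖z‖ ^ 2) :=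
        Real.log_nonneg (by nlinarith [sq_nonneg ‖z‖])
      simp only []
      linarith)
    rw [h1] at h2
    exact h2
  simp only [relEnt]
  rw [if_pos ⟨hacσ, hcondint⟩, hval]
  exact ⟨ENNReal.ofReal_le_ofReal (by linarith), ENNReal.ofReal_le_ofReal (by linarith)⟩
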